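/- Let n ≥ 1 and let f : (X,x_0) → (Y,y_0) be a based homotopy equivalence, i.e., there is a based map g : (Y,y_0) → (X,x_0) with g ∘ f based-homotopic to the identity of X and f ∘ g based-homotopic to the identity of Y. Then the induced isomorphism f_# : π_n(X,x_0) → π_n(Y,y_0) maps π_n^{Sp}(X,x_0) bijectively onto π_n^{Sp}(Y,y_0); in particular the restriction of f_# is a group isomorphism π_n^{Sp}(X,x_0) ≅ π_n^{Sp}(Y,y_0). -/

import Mathlib

open Set Topology unitInterval ContinuousMap

noncomputable section

/-- `𝒰` is an open cover of `X`. -/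
def IsOpenCover {X : Type*} [TopologicalSpace X] (𝒰 : Set (Set X)) : Prop :=
  (∀ U ∈ 𝒰, IsOpen U) ∧ ⋃₀ 𝒰 = univ

variable {X : Type*} [TopologicalSpace X]

/-- A continuous map `I^N → X` which, when regarded as a map on the `N`-sphere
(i.e. a cube map constant on the boundary), is freely homotopic---through maps
constant on the boundary---to a map whose image is contained in some member of `𝒰`. -/
def FreelySmall {N : Type*} (𝒰 : Set (Set X)) (p : C((N → I), X)) : Prop :=
  ∃ (q : C((N → I), X)) (U : Set X) (H : ContinuousMap.Homotopy p q),
    U ∈ 𝒰 ∧ range q ⊆ U ∧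
      ∀ t : I, ∀ y ∈ Cube.boundary N, ∀ z ∈ Cube.boundary N, H (t, y) = H (t, z)

/-- The `(n+1)`-st Spanier group of `(X,x₀)` with respect to the cover `𝒰`:
the subgroup of `π_{n+1}(X,x₀)` generated by classes of based maps which are freely
homotopic (as sphere maps) into some member of `𝒰`. -/
def spanierGroup (n : ℕ) (𝒰 : Set (Set X)) (x₀ : X) : Subgroup (π_ (n + 1) X x₀) :=
  Subgroup.closure {γ | ∃ f : GenLoop (Fin (n + 1)) X x₀, FreelySmall 𝒰 f.1 ∧ γ = ⟦f⟧}

/-- The absolute `(n+1)`-st Spanier group of `(X,x₀)`: the intersection of the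
Spanier groups over all open covers of `X`. -/
def spanierGroupAbs (n : ℕ) (x₀ : X) : Subgroup (π_ (n + 1) X x₀) :=
  ⨅ (𝒰 : Set (Set X)) (_ : IsOpenCover 𝒰), spanierGroup n 𝒰 x₀

/-- The map `π_{n+1}(X,x₀) → π_{n+1}(Y,y₀)` induced by a based map `f : (X,x₀) → (Y,y₀)`. -/
def inducedMap (n : ℕ) {Y : Type*} [TopologicalSpace Y] (f : C(X, Y)) {x₀ : X} {y₀ : Y}
    (hf : f x₀ = y₀) : π_ (n + 1) X x₀ → π_ (n + 1) Y y₀ :=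
  Quotient.map
    (fun g => ⟨f.comp g.1, fun y hy => by
      simp only [ContinuousMap.comp_apply, g.2 y hy, hf]⟩)
    (fun g₁ g₂ h => Nonempty.map (fun H => H.compContinuousMap f) h)

-- auxiliary defs
def pushGL {Y : Type*} [TopologicalSpace Y] {N : Type*} (f : C(X, Y)) {x₀ : X} {y₀ : Y}
    (hf : f x₀ = y₀) (p : GenLoop N X x₀) : GenLoop N Y y₀ :=
  ⟨f.comp p.1, fun y hy => by simp only [ContinuousMap.comp_apply, p.2 y hy, hf]⟩

lemma inducedMap_mk (n : ℕ) {Y : Type*} [TopologicalSpace Y] (f : C(X, Y)) {x₀ : X} {y₀ : Y}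
    (hf : f x₀ = y₀) (p : GenLoop (Fin (n+1)) X x₀) :
    inducedMap n f hf ⟦p⟧ = ⟦pushGL f hf p⟧ := rfl

lemma pushGL_transAt {Y : Type*} [TopologicalSpace Y] {N : Type*} [DecidableEq N] (f : C(X, Y))
    {x₀ : X} {y₀ : Y} (hf : f x₀ = y₀) (i : N) (p q : GenLoop N X x₀) :
    pushGL f hf (GenLoop.transAt i p q) = GenLoop.transAt i (pushGL f hf p) (pushGL f hf q) := by
  ext t
  show f (GenLoop.transAt i p q t) = _
  simp only [GenLoop.transAt, GenLoop.coe_copy, apply_ite f]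
  rfl

lemma inducedMap_mul (n : ℕ) {Y : Type*} [TopologicalSpace Y] (f : C(X, Y)) {x₀ : X} {y₀ : Y}
    (hf : f x₀ = y₀) (a b : π_ (n + 1) X x₀) :
    inducedMap n f hf (a * b) = inducedMap n f hf a * inducedMap n f hf b := by
  induction a using Quotient.ind with | _ p => ?_
  induction b using Quotient.ind with | _ q => ?_
  have h1 := HomotopyGroup.mul_spec (i := (0 : Fin (n+1))) (p := p) (q := q)
  have h2 := HomotopyGroup.mul_spec (i := (0 : Fin (n+1))) (p := pushGL f hf p)
    (q := pushGL f hf q)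
  beta_reduce at h1 h2
  rw [inducedMap_mk, inducedMap_mk, h1, h2, inducedMap_mk, pushGL_transAt]

lemma inducedMap_id (n : ℕ) (x₀ : X) :
    inducedMap n (ContinuousMap.id X) rfl = (id : π_ (n+1) X x₀ → π_ (n+1) X x₀) := by
  funext a
  induction a using Quotient.ind with | _ p => ?_
  rfl

lemma inducedMap_comp (n : ℕ) {Y Z : Type*} [TopologicalSpace Y] [TopologicalSpace Z]
    (f : C(X, Y)) (g : C(Y, Z)) {x₀ : X} {y₀ : Y} {z₀ : Z} (hf : f x₀ = y₀) (hg : g y₀ = z₀)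
    (a : π_ (n+1) X x₀) :
    inducedMap n g hg (inducedMap n f hf a)
      = inducedMap n (g.comp f) (by simp [hf, hg]) a := by
  induction a using Quotient.ind with | _ p => ?_
  rfl

lemma inducedMap_congr (n : ℕ) {Y : Type*} [TopologicalSpace Y] {f₁ f₂ : C(X, Y)} {x₀ : X}
    {y₀ : Y} (h₁ : f₁ x₀ = y₀) (h₂ : f₂ x₀ = y₀) (H : f₁.HomotopicRel f₂ {x₀}) :
    inducedMap n f₁ h₁ = inducedMap n f₂ h₂ := by
  obtain ⟨F⟩ := H
  funext a
  induction a using Quotient.ind with | _ p => ?_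
  apply Quotient.sound
  exact ⟨{ toHomotopy := F.toHomotopy.comp (ContinuousMap.Homotopy.refl p.1)
           prop' := fun t y hy => by
             show F (t, p.1 y) = f₁ (p.1 y)
             rw [p.2 y hy]
             exact F.eq_fst t rfl }⟩

lemma FreelySmall.push {Y : Type*} [TopologicalSpace Y] {N : Type*} (f : C(X, Y))
    (𝒰 : Set (Set Y)) {p : C((N → I), X)}
    (hp : FreelySmall {V | ∃ U ∈ 𝒰, V = f ⁻¹' U} p) : FreelySmall 𝒰 (f.comp p) := by
  obtain ⟨q, V, H, ⟨U, hU, rfl⟩, hq, hb⟩ := hp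
  refine ⟨f.comp q, U, (ContinuousMap.Homotopy.refl f).comp H, hU, ?_, ?_⟩
  · rintro _ ⟨t, rfl⟩
    exact hq ⟨t, rfl⟩
  · intro t y hy z hz
    simp only [ContinuousMap.Homotopy.comp_apply, ContinuousMap.Homotopy.refl_apply]
    rw [hb t y hy z hz]

lemma IsOpenCover.preimage {Y : Type*} [TopologicalSpace Y] (f : C(X, Y)) {𝒰 : Set (Set Y)}
    (h : IsOpenCover 𝒰) : IsOpenCover {V | ∃ U ∈ 𝒰, V = f ⁻¹' U} := by
  constructor
  · rintro V ⟨U, hU, rfl⟩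
    exact (h.1 U hU).preimage f.continuous
  · apply eq_univ_of_forall
    intro x
    have hx : f x ∈ ⋃₀ 𝒰 := h.2 ▸ mem_univ _
    obtain ⟨U, hU, hxU⟩ := hx
    exact ⟨f ⁻¹' U, ⟨U, hU, rfl⟩, hxU⟩

lemma inducedMap_mapsTo (n : ℕ) {Y : Type*} [TopologicalSpace Y] (f : C(X, Y)) {x₀ : X}
    {y₀ : Y} (hf : f x₀ = y₀) :
    Set.MapsTo (inducedMap n f hf) (spanierGroupAbs n x₀ : Set (π_ (n + 1) X x₀))
      (spanierGroupAbs n y₀ : Set (π_ (n + 1) Y y₀)) := by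
  intro a ha
  simp only [SetLike.mem_coe, spanierGroupAbs, Subgroup.mem_iInf] at ha ⊢
  intro 𝒰 h𝒰
  have ha' := ha _ (h𝒰.preimage f)
  let φ : π_ (n+1) X x₀ →* π_ (n+1) Y y₀ :=
    MonoidHom.mk' (inducedMap n f hf) (inducedMap_mul n f hf)
  have hmem : φ a ∈ (spanierGroup n {V | ∃ U ∈ 𝒰, V = f ⁻¹' U} x₀).map φ := ⟨a, ha', rfl⟩
  rw [spanierGroup, MonoidHom.map_closure] at hmem
  refine Subgroup.closure_mono ?_ hmem
  rintro _ ⟨_, ⟨p, hp, rfl⟩, rfl⟩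
  exact ⟨pushGL f hf p, FreelySmall.push f 𝒰 hp, rfl⟩

/-- If `f` is a based homotopy equivalence, then the induced isomorphism on `π_{n+1}`
restricts to a group isomorphism between the absolute Spanier groups: it is
multiplicative and maps `π_{n+1}^{Sp}(X,x₀)` bijectively onto `π_{n+1}^{Sp}(Y,y₀)`. -/
theorem inducedMap_spanierGroupAbs_bijOn (n : ℕ) {Y : Type*} [TopologicalSpace Y]
    (f : C(X, Y)) (x₀ : X) (y₀ : Y) (hf : f x₀ = y₀)
    (g : C(Y, X)) (hg : g y₀ = x₀)
    (hgf : (g.comp f).HomotopicRel (ContinuousMap.id X) {x₀})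
    (hfg : (f.comp g).HomotopicRel (ContinuousMap.id Y) {y₀}) :
    (∀ a b : π_ (n + 1) X x₀,
        inducedMap n f hf (a * b) = inducedMap n f hf a * inducedMap n f hf b) ∧
    Set.BijOn (inducedMap n f hf)
      (spanierGroupAbs n x₀ : Set (π_ (n + 1) X x₀))
      (spanierGroupAbs n y₀ : Set (π_ (n + 1) Y y₀)) := by
  refine ⟨inducedMap_mul n f hf, ?_⟩
  have hgfx : (g.comp f) x₀ = x₀ := by simp [hf, hg]
  have hfgy : (f.comp g) y₀ = y₀ := by simp [hf, hg]
  have hleft : ∀ a : π_ (n+1) X x₀, inducedMap n g hg (inducedMap n f hf a) = a := by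
    intro a
    rw [inducedMap_comp n f g hf hg a, inducedMap_congr n hgfx rfl hgf]
    exact congrFun (inducedMap_id n x₀) a
  have hright : ∀ b : π_ (n+1) Y y₀, inducedMap n f hf (inducedMap n g hg b) = b := by
    intro b
    rw [inducedMap_comp n g f hg hf b, inducedMap_congr n hfgy rfl hfg]
    exact congrFun (inducedMap_id n y₀) b
  exact Set.InvOn.bijOn ⟨fun a _ => hleft a, fun b _ => hright b⟩
    (inducedMap_mapsTo n f hf) (inducedMap_mapsTo n g hg)
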